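/- If a real number g > 0 satisfies the eigenvalue degeneracy condition Δ_h = 0, then the circuit sign constraints hold: ξ₁ and ξ₂ have the same sign, and L₁L₂ has the opposite sign, i.e. sign ξ₁ = sign ξ₂ = −sign(L₁L₂). -/

import Mathlib

/-- If a real number `g > 0` satisfies the eigenvalue degeneracy condition
`Δ_h = 0`, then the circuit sign constraints hold:
`sign ξ₁ = sign ξ₂ = −sign (L₁L₂)`. -/
theorem sign_constraints_of_degeneracy (L₁ C₁ L₂ C₂ : ℝ)
    (hL₁ : L₁ ≠ 0) (hC₁ : C₁ ≠ 0) (hL₂ : L₂ ≠ 0) (hC₂ : C₂ ≠ 0)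
    (ξ₁ ξ₂ : ℝ) (hξ₁ : ξ₁ = 1 / (L₁ * C₁)) (hξ₂ : ξ₂ = 1 / (L₂ * C₂))
    (g : ℝ) (hg : 0 < g)
    (hΔ : g ^ 2 / (L₁ ^ 2 * L₂ ^ 2) + 2 * (ξ₁ + ξ₂) * g / (L₁ * L₂) + (ξ₁ - ξ₂) ^ 2 = 0) :
    Real.sign ξ₁ = Real.sign ξ₂ ∧ Real.sign ξ₁ = -Real.sign (L₁ * L₂) := by
  have hL : L₁ * L₂ ≠ 0 := mul_ne_zero hL₁ hL₂
  set a : ℝ := g / (L₁ * L₂) with ha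
  have ha0 : a ≠ 0 := div_ne_zero (ne_of_gt hg) hL
  have hga : g = a * (L₁ * L₂) := by rw [ha, div_mul_cancel₀ g hL]
  have hquad : a ^ 2 + 2 * (ξ₁ + ξ₂) * a + (ξ₁ - ξ₂) ^ 2 = 0 := by
    have h3 : (L₁ * L₂) ^ 3 ≠ 0 := pow_ne_zero 3 hL
    field_simp [hga] at hΔ
    apply mul_left_cancel₀ h3
    rw [mul_zero]
    rw [ha]
    field_simp
    linear_combination (L₁ * L₂) * hΔ
  have hξ₁0 : ξ₁ ≠ 0 := by
    rw [hξ₁]; exact one_div_ne_zero (mul_ne_zero hL₁ hC₁)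
  have hξ₂0 : ξ₂ ≠ 0 := by
    rw [hξ₂]; exact one_div_ne_zero (mul_ne_zero hL₂ hC₂)
  have hprod : 0 < ξ₁ * ξ₂ := by
    have hsq : 4 * (ξ₁ * ξ₂) = (a + ξ₁ + ξ₂) ^ 2 := by nlinarith [hquad]
    rcases lt_or_gt_of_ne hξ₁0 with h1 | h1 <;>
    rcases lt_or_gt_of_ne hξ₂0 with h2 | h2
    · exact mul_pos_of_neg_of_neg h1 h2
    · nlinarith [sq_nonneg (a + ξ₁ + ξ₂)]
    · nlinarith [sq_nonneg (a + ξ₁ + ξ₂)]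
    · exact mul_pos h1 h2
  have key : ∀ s : ℝ, (0 < ξ₁ → 0 < ξ₂ → a < 0) := by
    intro _ h1 h2
    by_contra h
    push_neg at h
    have ha' : 0 < a := lt_of_le_of_ne h (Ne.symm ha0)
    nlinarith [hquad, mul_pos (by linarith : (0:ℝ) < 2 * (ξ₁ + ξ₂)) ha', sq_nonneg a]
  have key' : (ξ₁ < 0 → ξ₂ < 0 → 0 < a) := by
    intro h1 h2
    by_contra h
    push_neg at h
    have ha' : a < 0 := lt_of_le_of_ne h ha0
    nlinarith [hquad]
  have hsa : ∀ x : ℝ, 0 < a → (Real.sign (L₁ * L₂) = 1) := by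
    intro _ hpos
    apply Real.sign_of_pos
    rcases lt_or_gt_of_ne hL with h | h
    · exfalso; have := div_neg_of_pos_of_neg hg h; rw [← ha] at this; linarith
    · exact h
  have hsa' : a < 0 → (Real.sign (L₁ * L₂) = -1) := by
    intro hneg
    apply Real.sign_of_neg
    rcases lt_or_gt_of_ne hL with h | h
    · exact h
    · exfalso; have := div_pos hg h; rw [← ha] at this; linarith
  rcases lt_or_gt_of_ne hξ₁0 with h1 | h1
  · have h2 : ξ₂ < 0 := by
      rcases lt_or_gt_of_ne hξ₂0 with h2 | h2
      · exact h2
      · exfalso; nlinarith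
    have haa := key' h1 h2
    rw [Real.sign_of_neg h1, Real.sign_of_neg h2, hsa 0 haa]
    norm_num
  · have h2 : 0 < ξ₂ := by
      rcases lt_or_gt_of_ne hξ₂0 with h2 | h2
      · exfalso; nlinarith
      · exact h2
    have haa := key 0 h1 h2
    rw [Real.sign_of_pos h1, Real.sign_of_pos h2, hsa' haa]
    norm_num
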